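/- Assume conditions (9). Define D = (k1³n1³ + e1·k1²n1² + k1·n1 − e1)/e1 and E = k1²n1² + e1·k1·n1 − 1. Then W(x,y) = x^D·y^E is an integrating factor of the competitive system Z1 on the open first quadrant: for all x > 0 and y > 0, ∂/∂x [x^D·y^E · x·(k1·(1−n1·x) − e1·y − w1)] + ∂/∂y [x^D·y^E · y·(e1·p1·x − s1·y − h1)] = 0. -/
import Mathlib


open Real

/-- Under conditions (9), `W(x,y) = x^D·y^E` with
`D = (k1³n1³ + e1·k1²n1² + k1·n1 − e1)/e1` and `E = k1²n1² + e1·k1·n1 − 1`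
is an integrating factor of the competitive system `Z1` on the open first quadrant:
the divergence of `W·Z1` vanishes there. -/
theorem stmt3 (k1 n1 e1 p1 s1 w1 h1 : ℝ)
    (he : e1 ≠ 0)
    (hh : h1 = (k1 ^ 2 * n1 ^ 2 + e1 * k1 * n1 + 1) / e1)
    (hp : p1 = (k1 ^ 2 * n1 ^ 2 + 1) / e1 ^ 2)
    (hs : s1 = -(k1 * n1))
    (hw : w1 = -(k1 * n1) - e1 + k1) :
    ∀ x y : ℝ, 0 < x → 0 < y →
      deriv (fun s : ℝ =>
          s ^ ((k1 ^ 3 * n1 ^ 3 + e1 * k1 ^ 2 * n1 ^ 2 + k1 * n1 - e1) / e1)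
            * y ^ (k1 ^ 2 * n1 ^ 2 + e1 * k1 * n1 - 1)
            * (s * (k1 * (1 - n1 * s) - e1 * y - w1))) x
        + deriv (fun s : ℝ =>
            x ^ ((k1 ^ 3 * n1 ^ 3 + e1 * k1 ^ 2 * n1 ^ 2 + k1 * n1 - e1) / e1)
              * s ^ (k1 ^ 2 * n1 ^ 2 + e1 * k1 * n1 - 1)
              * (s * (e1 * p1 * x - s1 * s - h1))) y = 0 := by
  intro x y hx hy
  have hx0 : x ≠ 0 := ne_of_gt hx
  have hy0 : y ≠ 0 := ne_of_gt hy
  set D : ℝ := (k1 ^ 3 * n1 ^ 3 + e1 * k1 ^ 2 * n1 ^ 2 + k1 * n1 - e1) / e1 with hD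
  set E : ℝ := k1 ^ 2 * n1 ^ 2 + e1 * k1 * n1 - 1 with hE
  have hP' : HasDerivAt (fun s : ℝ => k1 * (1 - n1 * s) - e1 * y - w1)
      (k1 * (0 - n1 * 1) - 0 - 0) x :=
    ((((hasDerivAt_const x (1:ℝ)).sub ((hasDerivAt_id x).const_mul n1)).const_mul k1).sub
      (hasDerivAt_const x (e1 * y))).sub (hasDerivAt_const x w1)
  have hP : HasDerivAt (fun s : ℝ => s * (k1 * (1 - n1 * s) - e1 * y - w1))
      (1 * (k1 * (1 - n1 * x) - e1 * y - w1) + x * (k1 * (0 - n1 * 1) - 0 - 0)) x :=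
    (hasDerivAt_id x).mul hP'
  have hd1 : HasDerivAt (fun s : ℝ => s ^ D * y ^ E * (s * (k1 * (1 - n1 * s) - e1 * y - w1)))
      (D * x ^ (D - 1) * y ^ E * (x * (k1 * (1 - n1 * x) - e1 * y - w1))
        + x ^ D * y ^ E
          * (1 * (k1 * (1 - n1 * x) - e1 * y - w1) + x * (k1 * (0 - n1 * 1) - 0 - 0))) x :=
    ((Real.hasDerivAt_rpow_const (Or.inl hx0)).mul_const (y ^ E)).mul hP
  have hQ' : HasDerivAt (fun s : ℝ => e1 * p1 * x - s1 * s - h1) (0 - s1 * 1 - 0) y :=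
    ((hasDerivAt_const y (e1 * p1 * x)).sub ((hasDerivAt_id y).const_mul s1)).sub
      (hasDerivAt_const y h1)
  have hQ : HasDerivAt (fun s : ℝ => s * (e1 * p1 * x - s1 * s - h1))
      (1 * (e1 * p1 * x - s1 * y - h1) + y * (0 - s1 * 1 - 0)) y :=
    (hasDerivAt_id y).mul hQ'
  have hd2 : HasDerivAt (fun s : ℝ => x ^ D * s ^ E * (s * (e1 * p1 * x - s1 * s - h1)))
      (x ^ D * (E * y ^ (E - 1)) * (y * (e1 * p1 * x - s1 * y - h1))
        + x ^ D * y ^ E * (1 * (e1 * p1 * x - s1 * y - h1) + y * (0 - s1 * 1 - 0))) y :=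
    (((Real.hasDerivAt_rpow_const (Or.inl hy0)).const_mul (x ^ D)).mul hQ)
  rw [hd1.deriv, hd2.deriv]
  have hxs : x ^ (D - 1) = x ^ D / x := by
    rw [Real.rpow_sub hx, Real.rpow_one]
  have hys : y ^ (E - 1) = y ^ E / y := by
    rw [Real.rpow_sub hy, Real.rpow_one]
  rw [hxs, hys]
  have hXD : x ^ D ≠ 0 := ne_of_gt (Real.rpow_pos_of_pos hx D)
  have hYE : y ^ E ≠ 0 := ne_of_gt (Real.rpow_pos_of_pos hy E)
  subst hh hp hs hw
  rw [hD, hE]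
  field_simp
  ring
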